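/- Let H be a BF-monoid with accepted elasticity and let a ∈ H with ρ(L(a)) = ρ(H) such that min L(a)+1 ∈ L(a) and max L(a)−1 ∈ L(a). Then there exists N ∈ ℕ such that L(aⁿ) is a discrete interval for all n ≥ N. -/

import Mathlib

def IsAtomM {H : Type*} [CommMonoid H] (u : H) : Prop :=
  ¬ IsUnit u ∧ ∀ b c : H, u = b * c → IsUnit b ∨ IsUnit c

def LSetM {H : Type*} [CommMonoid H] (a : H) : Set ℕ :=
  {k | ∃ l : Multiset H, l.card = k ∧ (∀ u ∈ l, IsAtomM u) ∧ l.prod = a}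

noncomputable def rhoSet (L : Set ℕ) : ℚ := ((sSup L : ℕ) : ℚ) / ((sInf L : ℕ) : ℚ)

def IsIntervalSet (L : Set ℕ) : Prop := L.Nonempty ∧ L = Set.Icc (sInf L) (sSup L)

def IsBFMonoid (H : Type*) [CommMonoid H] : Prop :=
  ∀ a : H, ¬ IsUnit a → (LSetM a).Nonempty ∧ (LSetM a).Finite

lemma zero_mem_one {H : Type*} [CommMonoid H] : (0 : ℕ) ∈ LSetM (1 : H) :=
  ⟨0, rfl, by simp, rfl⟩

lemma add_mem_mul {H : Type*} [CommMonoid H] {x y : H} {k l : ℕ}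
    (hk : k ∈ LSetM x) (hl : l ∈ LSetM y) : k + l ∈ LSetM (x * y) := by
  obtain ⟨u, hu1, hu2, hu3⟩ := hk
  obtain ⟨v, hv1, hv2, hv3⟩ := hl
  refine ⟨u + v, by simp [hu1, hv1], fun w hw => ?_, by simp [hu3, hv3]⟩
  rcases Multiset.mem_add.1 hw with h | h
  exacts [hu2 w h, hv2 w h]

lemma smul_mem_pow {H : Type*} [CommMonoid H] {a : H} {k : ℕ}
    (hk : k ∈ LSetM a) (n : ℕ) : n * k ∈ LSetM (a ^ n) := by
  induction n with
  | zero => simpa using zero_mem_one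
  | succ n ih =>
      have := add_mem_mul ih hk
      rw [← pow_succ] at this
      simpa [Nat.succ_mul] using this

lemma rep_lemma (s n t : ℕ) (hs : 1 ≤ s) (hn : 2 * s ≤ n) (ht : t ≤ n * s) :
    ∃ c d e, c + d + e ≤ n ∧ c + d * (s - 1) + e * s = t := by
  set e := t / s with he
  set r := t % s with hr
  have hts : s * e + r = t := Nat.div_add_mod t s
  have hrs : r < s := Nat.mod_lt _ hs
  have hse : s * e ≤ t := Nat.le.intro hts
  have hen : e ≤ n := by
    have h : e * s ≤ n * s := by
      calc e * s = s * e := mul_comm _ _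
        _ ≤ t := hse
        _ ≤ n * s := ht
    exact Nat.le_of_mul_le_mul_right h hs
  have hts' : (s : ℤ) * e + r = t := by exact_mod_cast hts
  by_cases h0 : r = 0
  · refine ⟨0, 0, e, by omega, ?_⟩
    simp only [zero_add, zero_mul]
    have : (e : ℤ) * s = t := by linear_combination hts' - (by exact_mod_cast congrArg Nat.cast h0 : (r : ℤ) = 0)
    exact_mod_cast this
  by_cases h1 : e + r ≤ n
  · refine ⟨r, 0, e, by omega, ?_⟩
    have : (r : ℤ) + 0 * (s - 1) + e * s = t := by linear_combination hts'
    have hs1 : (1 : ℕ) ≤ s := hs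
    zify [hs1]
    linear_combination hts'
  · have hel : e < n := by
      have hr0 : 1 ≤ r := Nat.one_le_iff_ne_zero.2 h0
      have h : e * s < n * s := by
        calc e * s = s * e := mul_comm _ _
          _ < s * e + r := by omega
          _ = t := hts
          _ ≤ n * s := ht
      exact Nat.lt_of_mul_lt_mul_right h
    have hge : s - r ≤ e + 1 := by omega
    refine ⟨0, s - r, e + 1 - (s - r), by omega, ?_⟩
    have h2 : r ≤ s := le_of_lt hrs
    have hs1 : (1 : ℕ) ≤ s := hs
    zify [hge, h2, hs1]
    linear_combination hts'

lemma unit_of_zero_mem {H : Type*} [CommMonoid H] {x : H} (h : (0:ℕ) ∈ LSetM x) :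
    IsUnit x := by
  obtain ⟨l, hl, -, hp⟩ := h
  rw [Multiset.card_eq_zero] at hl
  subst hl
  simp only [Multiset.prod_zero] at hp
  exact hp ▸ isUnit_one

theorem stmt2 {H : Type*} [CancelCommMonoid H] (hBF : IsBFMonoid H) (ρH : ℚ)
    (hub : ∀ x : H, ¬ IsUnit x → rhoSet (LSetM x) ≤ ρH)
    (hacc : ∃ x : H, ¬ IsUnit x ∧ rhoSet (LSetM x) = ρH)
    (a : H) (ha : ¬ IsUnit a) (hra : rhoSet (LSetM a) = ρH)
    (hmin : sInf (LSetM a) + 1 ∈ LSetM a)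
    (hmax : sSup (LSetM a) - 1 ∈ LSetM a) :
    ∃ N : ℕ, ∀ n : ℕ, N ≤ n → IsIntervalSet (LSetM (a ^ n)) := by
  obtain ⟨hne, hfin⟩ := hBF a ha
  set m := sInf (LSetM a) with hmdef
  set M := sSup (LSetM a) with hMdef
  have hmem_m : m ∈ LSetM a := Nat.sInf_mem hne
  have hbdd : BddAbove (LSetM a) := hfin.bddAbove
  have hmem_M : M ∈ LSetM a := Nat.sSup_mem hne hbdd
  have hm1 : 1 ≤ m := by
    rcases Nat.eq_zero_or_pos m with h | h
    · exact absurd (unit_of_zero_mem (h ▸ hmem_m)) ha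
    · exact h
  have hmM : m + 1 ≤ M := le_csSup hbdd hmin
  set s := M - m with hsdef
  have hs : 1 ≤ s := by omega
  refine ⟨2 * s + 1, fun n hn => ?_⟩
  have hn1 : 1 ≤ n := by omega
  -- coverage of the interval [n*m, n*M]
  have hnms : n * m + n * s = n * M := by
    rw [← Nat.mul_add]
    congr 1
    omega
  have hcov : ∀ t, n * m ≤ t → t ≤ n * M → t ∈ LSetM (a ^ n) := by
    intro t h1 h2
    obtain ⟨c, d, e, hcde, heq⟩ := rep_lemma s n (t - n * m) hs (by omega)
      (Nat.sub_le_iff_le_add.2 (by linarith [hnms, h2]))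
    set b := n - (c + d + e) with hbdef
    have hb : b + c + d + e = n := by omega
    have hmem : b * m + c * (m + 1) + d * (M - 1) + e * M ∈ LSetM (a ^ n) := by
      have h3 := add_mem_mul (add_mem_mul (add_mem_mul (smul_mem_pow hmem_m b)
        (smul_mem_pow hmin c)) (smul_mem_pow hmax d)) (smul_mem_pow hmem_M e)
      rw [← pow_add, ← pow_add, ← pow_add, hb] at h3
      exact h3
    have hval : b * m + c * (m + 1) + d * (M - 1) + e * M = t := by
      have hmleM : m ≤ M := by omega
      rw [hsdef] at heq
      zify [hmleM, hs, h1, show 1 ≤ M by omega, show 1 ≤ M - m by omega] at heq ⊢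
      have hb' : (b : ℤ) + c + d + e = n := by exact_mod_cast hb
      linear_combination heq + (m : ℤ) * hb'
    rwa [hval] at hmem
  have hau : ¬ IsUnit (a ^ n) := by
    intro h
    exact ha ((isUnit_pow_iff (by omega : n ≠ 0)).1 h)
  obtain ⟨hne', hfin'⟩ := hBF _ hau
  have hbdd' : BddAbove (LSetM (a ^ n)) := hfin'.bddAbove
  set m' := sInf (LSetM (a ^ n)) with hm'def
  set M' := sSup (LSetM (a ^ n)) with hM'def
  have hmm' : m' ≤ n * m := Nat.sInf_le (hcov (n * m) le_rfl (by gcongr; omega))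
  have hMM' : n * M ≤ M' := le_csSup hbdd' (hcov (n * M) (by gcongr; omega) le_rfl)
  have hm'1 : 1 ≤ m' := by
    rcases Nat.eq_zero_or_pos m' with h | h
    · exact absurd (unit_of_zero_mem (h ▸ Nat.sInf_mem hne')) hau
    · exact h
  have hq : (M' : ℚ) / (m' : ℚ) ≤ (M : ℚ) / (m : ℚ) := by
    have h := hub (a ^ n) hau
    rw [← hra] at h
    simpa only [rhoSet, ← hmdef, ← hMdef, ← hm'def, ← hM'def] using h
  have hmul : M' * m ≤ M * m' := by
    have hmq : (0 : ℚ) < (m : ℚ) := by exact_mod_cast hm1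
    have hm'q : (0 : ℚ) < (m' : ℚ) := by exact_mod_cast hm'1
    rw [div_le_div_iff₀ hm'q hmq] at hq
    exact_mod_cast hq
  have hM'eq : M' = n * M := by
    have h1 : M' * m ≤ (n * M) * m := by
      calc M' * m ≤ M * m' := hmul
        _ ≤ M * (n * m) := by gcongr
        _ = (n * M) * m := by ring
    have h2 : (n * M) * m ≤ M' * m := Nat.mul_le_mul_right m hMM'
    exact Nat.eq_of_mul_eq_mul_right (by omega) (le_antisymm h1 h2)
  have hm'eq : m' = n * m := by
    have h1 : M * (n * m) ≤ M * m' := by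
      calc M * (n * m) = (n * M) * m := by ring
        _ = M' * m := by rw [hM'eq]
        _ ≤ M * m' := hmul
    have h2 : M * m' ≤ M * (n * m) := by gcongr
    exact (Nat.eq_of_mul_eq_mul_left (by omega) (le_antisymm h2 h1))
  refine ⟨hne', ?_⟩
  apply Set.eq_of_subset_of_subset
  · intro k hk
    exact ⟨Nat.sInf_le hk, le_csSup hbdd' hk⟩
  · rintro k ⟨hk1, hk2⟩
    rw [← hm'def] at hk1
    rw [← hM'def] at hk2
    exact hcov k (hm'eq ▸ hk1) (hM'eq ▸ hk2)
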